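/- Fix β > 0 and an integer j ≥ 0, and set b = β(j+1)/2. Let γ = √X·e^{iΘ}, where X and Θ are independent, X has density x ↦ b·(1−x)^{b−1} on [0,1], and Θ is uniform on [0,2π). Then for all real s, t satisfying 8·(t² + s²)/(1 + β(j+1))² < 1, one has E[ exp( t·Re(γ²) + s·Im(γ²) ) ] ≤ exp( 8·(t² + s²) / (1 + β(j+1))² ). -/

import Mathlib

open MeasureTheory

open Real intervalIntegral Filter

/-- The expectation `E[F(γ)]` where `γ = √X e^{iΘ}`, `X` has density
`x ↦ b (1−x)^{b−1}` on `[0,1]` and `Θ` is uniform on `[0,2π)`, independent: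
`∫₀¹ ∫₀^{2π} F(√x e^{iθ}) (b/(2π)) (1−x)^{b−1} dθ dx`. -/
noncomputable def verblunskyExp (b : ℝ) (F : ℂ → ℝ) : ℝ :=
  ∫ x in Set.Icc (0:ℝ) 1, ∫ θ in Set.Ico (0:ℝ) (2 * Real.pi),
    F ((Real.sqrt x : ℂ) * Complex.exp (Complex.I * (θ : ℝ))) *
      (b / (2 * Real.pi) * (1 - x) ^ (b - 1))

lemma gamma_sq_re_im (x θ : ℝ) (hx : 0 ≤ x) :
    (((Real.sqrt x : ℂ) * Complex.exp (Complex.I * (θ : ℝ))) ^ 2).re = x * Real.cos (2*θ) ∧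
    (((Real.sqrt x : ℂ) * Complex.exp (Complex.I * (θ : ℝ))) ^ 2).im = x * Real.sin (2*θ) := by
  have hs : ((Real.sqrt x : ℝ):ℂ) * ((Real.sqrt x : ℝ):ℂ) = (x:ℂ) := by
    rw [← Complex.ofReal_mul, Real.mul_self_sqrt hx]
  have h : (((Real.sqrt x : ℂ) * Complex.exp (Complex.I * (θ : ℝ))) ^ 2)
      = (x:ℂ) * Complex.exp (Complex.I * ((2*θ:ℝ):ℂ)) := by
    rw [mul_pow, sq (Complex.exp _), ← Complex.exp_add, sq, hs]
    push_cast; ring_nf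
  rw [h]
  constructor <;>
  · simp [Complex.mul_re, Complex.mul_im, Complex.exp_re, Complex.exp_im]

lemma trig_bound (t s ψ : ℝ) : |t * Real.cos ψ + s * Real.sin ψ| ≤ Real.sqrt (t^2 + s^2) := by
  have h1 := Real.sin_sq_add_cos_sq ψ
  have h2 : (t * Real.cos ψ + s * Real.sin ψ)^2 ≤ t^2 + s^2 := by
    nlinarith [sq_nonneg (t * Real.sin ψ - s * Real.cos ψ)]
  calc |t * Real.cos ψ + s * Real.sin ψ|
      = Real.sqrt ((t * Real.cos ψ + s * Real.sin ψ)^2) := (Real.sqrt_sq_eq_abs _).symm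
  _ ≤ Real.sqrt (t^2+s^2) := Real.sqrt_le_sqrt h2

lemma inv_le_exp {q : ℝ} (h0 : 0 ≤ q) (h1 : q < 1) : 1 / (1 - q/2) ≤ Real.exp q := by
  have h3 : 0 < 1 - q/2 := by linarith
  rw [div_le_iff₀ h3]
  nlinarith [Real.add_one_le_exp q]


lemma sinh_int_zero (a d : ℝ) :
    ∫ θ in (0:ℝ)..(2*π), Real.sinh (a * Real.cos (2*θ) + d * Real.sin (2*θ)) = 0 := by
  set f : ℝ → ℝ := fun θ => Real.sinh (a * Real.cos (2*θ) + d * Real.sin (2*θ)) with hf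
  have hper : Function.Periodic f (2*π) := by
    intro θ; simp only [hf]
    have h1 : 2 * (θ + 2*π) = 2*θ + (2:ℤ) * (2*π) := by push_cast; ring
    rw [h1, Real.cos_add_int_mul_two_pi, Real.sin_add_int_mul_two_pi]
  have hshift : ∫ θ in (0:ℝ)..(2*π), f θ = ∫ θ in (0:ℝ)..(2*π), f (θ + π/2) := by
    rw [integral_comp_add_right f (π/2)]
    have := hper.intervalIntegral_add_eq (0 + π/2) 0
    simpa [add_comm, add_left_comm] using this.symm
  have hneg : ∀ θ : ℝ, f (θ + π/2) = - f θ := by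
    intro θ; simp only [hf]
    have h1 : 2 * (θ + π/2) = 2*θ + π := by ring
    rw [h1, Real.cos_add_pi, Real.sin_add_pi]
    rw [show a * -Real.cos (2*θ) + d * -Real.sin (2*θ) = -(a * Real.cos (2*θ) + d * Real.sin (2*θ)) by ring, Real.sinh_neg]
  have : ∫ θ in (0:ℝ)..(2*π), f θ = - ∫ θ in (0:ℝ)..(2*π), f θ := by
    nth_rewrite 1 [hshift]
    simp only [hneg]
    rw [intervalIntegral.integral_neg]
  linarith [this]


lemma inner_bound (t s x : ℝ) (hx0 : 0 ≤ x) :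
    ∫ θ in Set.Ico (0:ℝ) (2*π), Real.exp (t * (x * Real.cos (2*θ)) + s * (x * Real.sin (2*θ)))
      ≤ (2*π) * Real.cosh (Real.sqrt (t^2+s^2) * x) := by
  have h2π : (0:ℝ) ≤ 2*π := by positivity
  have key : ∀ θ : ℝ, |(t*x) * Real.cos (2*θ) + (s*x) * Real.sin (2*θ)| ≤ Real.sqrt (t^2+s^2) * x := by
    intro θ
    have h := trig_bound t s (2*θ)
    calc |(t*x) * Real.cos (2*θ) + (s*x) * Real.sin (2*θ)|
        = |x| * |t * Real.cos (2*θ) + s * Real.sin (2*θ)| := by rw [← abs_mul]; ring_nf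
      _ ≤ x * Real.sqrt (t^2+s^2) := by
          rw [abs_of_nonneg hx0]; exact mul_le_mul_of_nonneg_left h hx0
      _ = Real.sqrt (t^2+s^2) * x := mul_comm _ _
  rw [integral_Ico_eq_integral_Ioo, ← integral_Ioc_eq_integral_Ioo, ← intervalIntegral.integral_of_le h2π]
  have heq : ∀ θ : ℝ, Real.exp (t * (x * Real.cos (2*θ)) + s * (x * Real.sin (2*θ)))
      = Real.cosh ((t*x) * Real.cos (2*θ) + (s*x) * Real.sin (2*θ))
        + Real.sinh ((t*x) * Real.cos (2*θ) + (s*x) * Real.sin (2*θ)) := by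
    intro θ; rw [Real.cosh_add_sinh]; ring_nf
  simp only [heq]
  have hic : IntervalIntegrable (fun θ => Real.cosh ((t*x) * Real.cos (2*θ) + (s*x) * Real.sin (2*θ))) volume 0 (2*π) :=
    (Continuous.intervalIntegrable (by continuity) _ _)
  have his : IntervalIntegrable (fun θ => Real.sinh ((t*x) * Real.cos (2*θ) + (s*x) * Real.sin (2*θ))) volume 0 (2*π) :=
    (Continuous.intervalIntegrable (by continuity) _ _)
  rw [intervalIntegral.integral_add hic his, sinh_int_zero, add_zero]
  have hmono : ∫ θ in (0:ℝ)..(2*π), Real.cosh ((t*x) * Real.cos (2*θ) + (s*x) * Real.sin (2*θ))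
      ≤ ∫ _ in (0:ℝ)..(2*π), Real.cosh (Real.sqrt (t^2+s^2) * x) := by
    apply intervalIntegral.integral_mono_on h2π hic (intervalIntegrable_const)
    intro θ _
    rw [← Real.cosh_abs]
    exact Real.cosh_le_cosh.2 (by rw [abs_abs, abs_of_nonneg (by positivity : (0:ℝ) ≤ Real.sqrt (t^2+s^2) * x)]; exact key θ)
  calc _ ≤ _ := hmono
  _ = (2*π) * Real.cosh (Real.sqrt (t^2+s^2) * x) := by
      rw [intervalIntegral.integral_const]; simp [smul_eq_mul]


lemma rpow_ii (b : ℝ) (hb : 0 < b) :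
    IntervalIntegrable (fun x : ℝ => (1-x) ^ (b-1)) volume 0 1 := by
  have h := (intervalIntegrable_rpow' (a := 0) (b := 1) (r := b-1) (by linarith)).comp_sub_left 1
  simpa using h.symm

lemma cont_rpow (b : ℝ) (hb : 0 < b) : Continuous (fun x : ℝ => (1-x) ^ b) := by
  rw [continuous_iff_continuousAt]
  intro x
  exact (Real.continuousAt_rpow_const (1-x) b (Or.inr hb.le)).comp (continuousAt_const.sub continuousAt_id)

lemma parts (b : ℝ) (hb : 0 < b) (n : ℕ) :
    ∫ x in (0:ℝ)..1, (1-x) ^ (b-1) * (b * x^(n+1))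
      = ∫ x in (0:ℝ)..1, (1-x) ^ b * ((n+1) * x^n) := by
  set g : ℝ → ℝ := fun x => (1-x) ^ b * x^(n+1) with hg
  set g' : ℝ → ℝ := fun x => (1-x) ^ b * ((n+1) * x^n) - (1-x) ^ (b-1) * (b * x^(n+1)) with hg'
  have hA : IntervalIntegrable (fun x : ℝ => (1-x) ^ b * ((n+1:ℝ) * x^n)) volume 0 1 :=
    (Continuous.intervalIntegrable (by exact (cont_rpow b hb).mul (by continuity)) _ _)
  have hB : IntervalIntegrable (fun x : ℝ => (1-x) ^ (b-1) * (b * x^(n+1))) volume 0 1 :=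
    (rpow_ii b hb).mul_continuousOn (by exact (continuous_const.mul (continuous_pow (n+1))).continuousOn)
  have hderiv : ∀ x ∈ Set.Ioo (0:ℝ) 1, HasDerivAt g (g' x) x := by
    intro x hx
    have hx1 : (0:ℝ) < 1 - x := by simp [Set.mem_Ioo] at hx; linarith [hx.2]
    have h1 : HasDerivAt (fun y : ℝ => (1-y) ^ b) (b * (1-x)^(b-1) * (-1)) x := by
      have := (Real.hasDerivAt_rpow_const (x := 1-x) (p := b) (Or.inl hx1.ne'))
      exact this.comp x ((hasDerivAt_id x).const_sub 1) |>.congr_deriv (by ring)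
    have h2 : HasDerivAt (fun y : ℝ => y^(n+1)) ((n+1) * x^n) x := by
      simpa using hasDerivAt_pow (n+1) x
    have := h1.mul h2
    refine this.congr_deriv ?_
    simp only [hg']; push_cast; ring
  have hcont : ContinuousOn g (Set.Icc 0 1) := ((cont_rpow b hb).mul (continuous_pow (n+1))).continuousOn
  have hint : IntervalIntegrable g' volume 0 1 := hA.sub hB
  have hftc := intervalIntegral.integral_eq_sub_of_hasDeriv_right_of_le (by norm_num)
    hcont (fun x hx => (hderiv x hx).hasDerivWithinAt) hint
  have hg1 : g 1 = 0 := by simp [hg, Real.zero_rpow hb.ne']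
  have hg0 : g 0 = 0 := by simp [hg]
  rw [hg1, hg0, sub_zero] at hftc
  have := intervalIntegral.integral_sub hA hB
  rw [← hg'] at this
  rw [hftc] at this
  linarith [this]

lemma moment_base (b : ℝ) (hb : 0 < b) :
    ∫ x in (0:ℝ)..1, (1-x) ^ (b-1) * (b * x^0) = 1 := by
  set g : ℝ → ℝ := fun x => -((1-x) ^ b) with hg
  have hderiv : ∀ x ∈ Set.Ioo (0:ℝ) 1, HasDerivAt g ((1-x) ^ (b-1) * (b * x^0)) x := by
    intro x hx
    have hx1 : (0:ℝ) < 1 - x := by simp [Set.mem_Ioo] at hx; linarith [hx.2]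
    have h1 : HasDerivAt (fun y : ℝ => (1-y) ^ b) (b * (1-x)^(b-1) * (-1)) x :=
      ((Real.hasDerivAt_rpow_const (x := 1-x) (p := b) (Or.inl hx1.ne')).comp x
        ((hasDerivAt_id x).const_sub 1)).congr_deriv (by ring)
    have := h1.neg
    exact this.congr_deriv (by ring)
  have hint : IntervalIntegrable (fun x : ℝ => (1-x) ^ (b-1) * (b * x^0)) volume 0 1 :=
    (rpow_ii b hb).mul_continuousOn (by exact (continuous_const.mul (continuous_pow 0)).continuousOn)
  have hftc := intervalIntegral.integral_eq_sub_of_hasDeriv_right_of_le (by norm_num)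
    (((cont_rpow b hb).neg).continuousOn) (fun x hx => (hderiv x hx).hasDerivWithinAt) hint
  rw [hftc]
  simp [hg, Real.zero_rpow hb.ne']

lemma moment : ∀ (n : ℕ) (b : ℝ), 0 < b →
    ∫ x in (0:ℝ)..1, (1-x) ^ (b-1) * (b * x^n)
      = n.factorial / ∏ i ∈ Finset.range n, (b + i + 1) := by
  intro n
  induction n with
  | zero => intro b hb; simpa using moment_base b hb
  | succ n ih =>
    intro b hb
    have hb1 : (0:ℝ) < b + 1 := by linarith
    have hpt : ∀ x : ℝ, (1-x) ^ (b-1) * (b * x^(n+1)) = (1-x) ^ (b-1) * (b * x^(n+1)) := fun _ => rfl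
    rw [parts b hb n]
    have heq : (fun x : ℝ => (1-x) ^ b * ((n+1:ℝ) * x^n))
        = (fun x : ℝ => ((n+1:ℝ)/(b+1)) * ((1-x) ^ ((b+1)-1) * ((b+1) * x^n))) := by
      funext x
      rw [show b + 1 - 1 = b by ring]
      field_simp
    calc ∫ x in (0:ℝ)..1, (1-x) ^ b * ((n+1:ℝ) * x^n)
        = ∫ x in (0:ℝ)..1, ((n+1:ℝ)/(b+1)) * ((1-x) ^ ((b+1)-1) * ((b+1) * x^n)) := by rw [heq]
      _ = ((n+1:ℝ)/(b+1)) * ∫ x in (0:ℝ)..1, (1-x) ^ ((b+1)-1) * ((b+1) * x^n) :=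
          intervalIntegral.integral_const_mul _ _
      _ = ((n+1:ℝ)/(b+1)) * (n.factorial / ∏ i ∈ Finset.range n, ((b+1) + i + 1)) := by
          rw [ih (b+1) hb1]
      _ = (n+1).factorial / ∏ i ∈ Finset.range (n+1), (b + i + 1) := by
          rw [Finset.prod_range_succ' (fun i => b + i + 1) n]
          have hprodpos : (0:ℝ) < ∏ i ∈ Finset.range n, ((b+1) + i + 1) := by
            apply Finset.prod_pos; intro i _; positivity
          have hre : ∏ i ∈ Finset.range n, (b + (i+1:ℕ) + 1) = ∏ i ∈ Finset.range n, ((b+1) + i + 1) := by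
            apply Finset.prod_congr rfl; intro i _; push_cast; ring
          rw [hre, Nat.factorial_succ]
          push_cast
          field_simp
          ring


lemma prod_ge (b : ℝ) (hb : 0 < b) (k : ℕ) :
    ((b+1)*(b+2))^k ≤ ∏ i ∈ Finset.range (2*k), (b + i + 1) := by
  induction k with
  | zero => simp
  | succ k ih =>
    have h2 : 2*(k+1) = (2*k) + 1 + 1 := by ring
    rw [h2, Finset.prod_range_succ, Finset.prod_range_succ]
    have h3 : ((b+1)*(b+2))^(k+1) = ((b+1)*(b+2))^k * ((b+1)*(b+2)) := pow_succ _ _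
    rw [h3]
    have hprodpos : (0:ℝ) < ∏ i ∈ Finset.range (2*k), (b + i + 1) :=
      Finset.prod_pos (fun i _ => by positivity)
    have hfac : (b+1)*(b+2) ≤ (b + (2*k:ℕ) + 1) * (b + ((2*k:ℕ)+1) + 1) := by
      have : (0:ℝ) ≤ (2*k:ℕ) := by positivity
      nlinarith
    calc ((b+1)*(b+2))^k * ((b+1)*(b+2))
        ≤ (∏ i ∈ Finset.range (2*k), (b + i + 1)) * ((b + (2*k:ℕ) + 1) * (b + ((2*k:ℕ)+1) + 1)) := by
          apply mul_le_mul ih hfac (by positivity) hprodpos.le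
      _ = (∏ i ∈ Finset.range (2*k), (b + i + 1)) * (b + ((2*k:ℕ):ℝ) + 1) * (b + ((2*k+1:ℕ):ℝ) + 1) := by
          push_cast; ring

lemma w_integrableOn (b : ℝ) (hb : 0 < b) :
    IntegrableOn (fun x : ℝ => (1-x) ^ (b-1)) (Set.Icc (0:ℝ) 1) volume := by
  rw [integrableOn_Icc_iff_integrableOn_Ioc]
  exact (intervalIntegrable_iff_integrableOn_Ioc_of_le (by norm_num)).1 (rpow_ii b hb)

lemma term_integrableOn (b : ℝ) (hb : 0 < b) (n : ℕ) (a : ℝ) :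
    IntegrableOn (fun x : ℝ => a * x^n * (b * (1-x) ^ (b-1))) (Set.Icc (0:ℝ) 1) volume := by
  rw [integrableOn_Icc_iff_integrableOn_Ioc]
  have := ((rpow_ii b hb).mul_continuousOn
    (g := fun x : ℝ => a * x^n * b) (by exact ((continuous_const.mul (continuous_pow n)).mul continuous_const).continuousOn))
  have h2 := (intervalIntegrable_iff_integrableOn_Ioc_of_le (by norm_num : (0:ℝ) ≤ 1)).1 this
  apply h2.congr_fun ?_ measurableSet_Ioc
  intro x _; ring

lemma term_value (b : ℝ) (hb : 0 < b) (n : ℕ) (a : ℝ) :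
    ∫ x in Set.Icc (0:ℝ) 1, a * x^n * (b * (1-x) ^ (b-1))
      = a * (n.factorial / ∏ i ∈ Finset.range n, (b + i + 1)) := by
  rw [integral_Icc_eq_integral_Ioc, ← intervalIntegral.integral_of_le (by norm_num : (0:ℝ) ≤ 1)]
  rw [← moment n b hb]
  rw [show (fun x : ℝ => (1-x) ^ (b-1) * (b * x^n)) = fun x : ℝ => (1-x) ^ (b-1) * (b * x^n) from rfl]
  rw [← intervalIntegral.integral_const_mul]
  apply intervalIntegral.integral_congr
  intro x _; simp; ring

lemma J_bound (b c : ℝ) (hb : 0 < b) (hc : 0 ≤ c) (hρ : c / ((b+1)*(b+2)) < 1) :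
    ∫ x in Set.Icc (0:ℝ) 1, Real.cosh (Real.sqrt c * x) * (b * (1-x) ^ (b-1))
      ≤ 1 / (1 - c / ((b+1)*(b+2))) := by
  set ρ : ℝ := c / ((b+1)*(b+2)) with hρdef
  have hρ0 : 0 ≤ ρ := by positivity
  set F : ℕ → ℝ → ℝ := fun N x => (∑ k ∈ Finset.range N, c^k / (2*k).factorial * x^(2*k)) * (b * (1-x) ^ (b-1)) with hF
  have hterm : ∀ x : ℝ, ∀ k : ℕ, (Real.sqrt c * x)^(2*k) / (2*k).factorial = c^k / (2*k).factorial * x^(2*k) := by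
    intro x k
    rw [mul_pow, pow_mul, Real.sq_sqrt hc]
    ring
  -- measurability
  have hmeas : ∀ N, AEStronglyMeasurable (F N) (volume.restrict (Set.Icc (0:ℝ) 1)) := by
    intro N
    apply Measurable.aestronglyMeasurable
    apply Measurable.mul (by measurability)
    exact (measurable_const.mul ((measurable_const.sub measurable_id).pow measurable_const))
  -- bound integrable
  have hbi : Integrable (fun x : ℝ => Real.cosh (Real.sqrt c) * (b * (1-x) ^ (b-1)))
      (volume.restrict (Set.Icc (0:ℝ) 1)) := by
    exact (((w_integrableOn b hb).const_mul b).const_mul _)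
  -- h_bound
  have hbound : ∀ N : ℕ, ∀ᵐ x ∂(volume.restrict (Set.Icc (0:ℝ) 1)),
      ‖F N x‖ ≤ Real.cosh (Real.sqrt c) * (b * (1-x) ^ (b-1)) := by
    intro N
    rw [ae_restrict_iff' measurableSet_Icc]
    filter_upwards with x hx
    obtain ⟨hx0, hx1⟩ := hx
    have hw : (0:ℝ) ≤ (1-x) ^ (b-1) := Real.rpow_nonneg (by linarith) _
    have hsnn : (0:ℝ) ≤ ∑ k ∈ Finset.range N, c^k / (2*k).factorial * x^(2*k) := by
      apply Finset.sum_nonneg; intro k _; positivity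
    have hps : ∑ k ∈ Finset.range N, c^k / (2*k).factorial * x^(2*k) ≤ Real.cosh (Real.sqrt c * x) := by
      have hsum := Real.hasSum_cosh (Real.sqrt c * x)
      have := sum_le_hasSum (Finset.range N) (fun k _ => by positivity) hsum
      refine le_trans (le_of_eq ?_) this
      exact Finset.sum_congr rfl (fun k _ => (hterm x k).symm)
    have hcc : Real.cosh (Real.sqrt c * x) ≤ Real.cosh (Real.sqrt c) := by
      apply Real.cosh_le_cosh.2
      rw [abs_of_nonneg (by positivity), abs_of_nonneg (Real.sqrt_nonneg c)]
      exact mul_le_of_le_one_right (Real.sqrt_nonneg c) hx1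
    rw [Real.norm_eq_abs, abs_of_nonneg (by positivity)]
    exact mul_le_mul_of_nonneg_right (hps.trans hcc) (by positivity)
  -- h_lim
  have hlim : ∀ᵐ x ∂(volume.restrict (Set.Icc (0:ℝ) 1)),
      Filter.Tendsto (fun N => F N x) atTop (nhds (Real.cosh (Real.sqrt c * x) * (b * (1-x) ^ (b-1)))) := by
    filter_upwards with x
    have hsum := (Real.hasSum_cosh (Real.sqrt c * x)).tendsto_sum_nat
    have hsum2 : Filter.Tendsto (fun N => ∑ k ∈ Finset.range N, c^k / (2*k).factorial * x^(2*k))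
        atTop (nhds (Real.cosh (Real.sqrt c * x))) := by
      refine hsum.congr (fun N => ?_)
      exact Finset.sum_congr rfl (fun k _ => hterm x k)
    exact hsum2.mul_const _
  have hDCT := MeasureTheory.tendsto_integral_of_dominated_convergence _ hmeas hbi hbound hlim
  -- each partial integral bounded
  have hFN : ∀ N : ℕ, ∫ x in Set.Icc (0:ℝ) 1, F N x ≤ 1 / (1 - ρ) := by
    intro N
    have hsplit : ∫ x in Set.Icc (0:ℝ) 1, F N x
        = ∑ k ∈ Finset.range N, ∫ x in Set.Icc (0:ℝ) 1, c^k / (2*k).factorial * x^(2*k) * (b * (1-x) ^ (b-1)) := by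
      rw [← MeasureTheory.integral_finset_sum _ (fun k _ => term_integrableOn b hb (2*k) _)]
      apply MeasureTheory.integral_congr_ae
      filter_upwards with x
      simp only [hF]; rw [Finset.sum_mul]
    rw [hsplit]
    have hterme : ∀ k ∈ Finset.range N, ∫ x in Set.Icc (0:ℝ) 1, c^k / (2*k).factorial * x^(2*k) * (b * (1-x) ^ (b-1)) ≤ ρ^k := by
      intro k _
      rw [term_value b hb (2*k) _]
      have hP : (0:ℝ) < ∏ i ∈ Finset.range (2*k), (b + i + 1) :=
        Finset.prod_pos (fun i _ => by positivity)
      have hPe : ((b+1)*(b+2))^k ≤ ∏ i ∈ Finset.range (2*k), (b + i + 1) := prod_ge b hb k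
      have hfac : (0:ℝ) < (2*k).factorial := by positivity
      have heq : c^k / (2*k).factorial * ((2*k).factorial / ∏ i ∈ Finset.range (2*k), (b + i + 1))
          = c^k / ∏ i ∈ Finset.range (2*k), (b + i + 1) := by
        field_simp
      rw [heq, hρdef, div_pow, ← Real.rpow_natCast]
      rw [Real.rpow_natCast]
      exact div_le_div_of_nonneg_left (by positivity) (by positivity) hPe
    calc ∑ k ∈ Finset.range N, ∫ x in Set.Icc (0:ℝ) 1, c^k / (2*k).factorial * x^(2*k) * (b * (1-x) ^ (b-1))
        ≤ ∑ k ∈ Finset.range N, ρ^k := Finset.sum_le_sum hterme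
      _ ≤ 1 / (1-ρ) := by
          rw [le_div_iff₀ (by linarith)]
          have hg := geom_sum_mul ρ N
          have hpn : (0:ℝ) ≤ ρ^N := by positivity
          nlinarith [hg]
  exact le_of_tendsto hDCT (Filter.Eventually.of_forall hFN)

lemma wmul_integrableOn (b : ℝ) (hb : 0 < b) (h : ℝ → ℝ) (hh : Continuous h) :
    IntegrableOn (fun x : ℝ => h x * (b * (1-x) ^ (b-1))) (Set.Icc (0:ℝ) 1) volume := by
  rw [integrableOn_Icc_iff_integrableOn_Ioc]
  have h1 := (rpow_ii b hb).mul_continuousOn (g := fun x => h x * b)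
    ((hh.mul continuous_const).continuousOn)
  have h2 := (intervalIntegrable_iff_integrableOn_Ioc_of_le (by norm_num : (0:ℝ) ≤ 1)).1 h1
  exact h2.congr_fun (fun x _ => by ring) measurableSet_Ioc

/-- Subgaussianity of the square of a deformed Verblunsky coefficient `γ` of the CβE:
if `8(t²+s²)/(1+β(j+1))² < 1` then
`E[exp(t Re(γ²) + s Im(γ²))] ≤ exp(8(t²+s²)/(1+β(j+1))²)`. -/
theorem verblunsky_sq_subgaussian (β : ℝ) (hβ : 0 < β) (j : ℕ) (s t : ℝ)
    (hst : 8 * (t ^ 2 + s ^ 2) / (1 + β * (j + 1)) ^ 2 < 1) :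
    verblunskyExp (β * (j + 1) / 2)
        (fun γ => Real.exp (t * (γ ^ 2).re + s * (γ ^ 2).im))
      ≤ Real.exp (8 * (t ^ 2 + s ^ 2) / (1 + β * (j + 1)) ^ 2) := by
  set b : ℝ := β * (j + 1) / 2 with hbdef
  have hb : 0 < b := by positivity
  set c : ℝ := t ^ 2 + s ^ 2 with hcdef
  have hc : 0 ≤ c := by positivity
  set q : ℝ := 8 * c / (1 + β * (j + 1)) ^ 2 with hqdef
  have htb : 1 + β * (j + 1) = 2 * b + 1 := by rw [hbdef]; ring
  have hq0 : 0 ≤ q := by rw [hqdef, htb]; positivity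
  have hq1 : q < 1 := hst
  set ρ : ℝ := c / ((b+1)*(b+2)) with hρdef
  have hρq : ρ ≤ q / 2 := by
    have h2 : q/2 = 4*c/(2*b+1)^2 := by rw [hqdef, htb]; ring
    rw [hρdef, h2, div_le_div_iff₀ (by positivity) (by positivity)]
    nlinarith [hc, hb]
  have hρ1 : ρ < 1 := by linarith
  -- pointwise inner bound
  have hpoint : ∀ x ∈ Set.Icc (0:ℝ) 1,
      (∫ θ in Set.Ico (0:ℝ) (2 * Real.pi),
        (fun γ : ℂ => Real.exp (t * (γ ^ 2).re + s * (γ ^ 2).im))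
          ((Real.sqrt x : ℂ) * Complex.exp (Complex.I * (θ : ℝ))) *
          (b / (2 * Real.pi) * (1 - x) ^ (b - 1)))
      ≤ Real.cosh (Real.sqrt c * x) * (b * (1-x) ^ (b-1)) := by
    intro x hx
    obtain ⟨hx0, hx1⟩ := hx
    have hw : (0:ℝ) ≤ (1-x) ^ (b-1) := Real.rpow_nonneg (by linarith) _
    have hre : ∀ θ : ℝ,
        (fun γ : ℂ => Real.exp (t * (γ ^ 2).re + s * (γ ^ 2).im))
          ((Real.sqrt x : ℂ) * Complex.exp (Complex.I * (θ : ℝ)))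
        = Real.exp (t * (x * Real.cos (2*θ)) + s * (x * Real.sin (2*θ))) := by
      intro θ
      have h := gamma_sq_re_im x θ hx0
      simp only [h.1, h.2]
    calc (∫ θ in Set.Ico (0:ℝ) (2 * Real.pi),
        (fun γ : ℂ => Real.exp (t * (γ ^ 2).re + s * (γ ^ 2).im))
          ((Real.sqrt x : ℂ) * Complex.exp (Complex.I * (θ : ℝ))) *
          (b / (2 * Real.pi) * (1 - x) ^ (b - 1)))
        = (∫ θ in Set.Ico (0:ℝ) (2 * Real.pi),
            Real.exp (t * (x * Real.cos (2*θ)) + s * (x * Real.sin (2*θ))))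
            * (b / (2 * Real.pi) * (1 - x) ^ (b - 1)) := by
          rw [← MeasureTheory.integral_mul_const]
          exact MeasureTheory.integral_congr_ae (Filter.Eventually.of_forall (fun θ => by simp only [hre θ]))
      _ ≤ (2 * Real.pi * Real.cosh (Real.sqrt c * x)) * (b / (2 * Real.pi) * (1 - x) ^ (b - 1)) := by
          apply mul_le_mul_of_nonneg_right (inner_bound t s x hx0) (by positivity)
      _ = Real.cosh (Real.sqrt c * x) * (b * (1-x) ^ (b-1)) := by
          field_simp
  -- integrability of the majorant
  have hgi : IntegrableOn (fun x : ℝ => Real.cosh (Real.sqrt c * x) * (b * (1-x) ^ (b-1)))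
      (Set.Icc (0:ℝ) 1) volume :=
    wmul_integrableOn b hb _ (Real.continuous_cosh.comp (continuous_const.mul continuous_id))
  -- nonnegativity of inner integrals
  have hnn : ∀ x ∈ Set.Icc (0:ℝ) 1,
      0 ≤ ∫ θ in Set.Ico (0:ℝ) (2 * Real.pi),
        (fun γ : ℂ => Real.exp (t * (γ ^ 2).re + s * (γ ^ 2).im))
          ((Real.sqrt x : ℂ) * Complex.exp (Complex.I * (θ : ℝ))) *
          (b / (2 * Real.pi) * (1 - x) ^ (b - 1)) := by
    intro x hx
    obtain ⟨hx0, hx1⟩ := hx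
    have hw : (0:ℝ) ≤ (1-x) ^ (b-1) := Real.rpow_nonneg (by linarith) _
    apply MeasureTheory.integral_nonneg
    intro θ
    have := Real.exp_nonneg (t * ((((Real.sqrt x : ℂ) * Complex.exp (Complex.I * (θ : ℝ))) ^ 2).re)
      + s * ((((Real.sqrt x : ℂ) * Complex.exp (Complex.I * (θ : ℝ))) ^ 2).im))
    positivity
  -- main estimate
  have hE : verblunskyExp b (fun γ => Real.exp (t * (γ ^ 2).re + s * (γ ^ 2).im))
      ≤ ∫ x in Set.Icc (0:ℝ) 1, Real.cosh (Real.sqrt c * x) * (b * (1-x) ^ (b-1)) := by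
    unfold verblunskyExp
    apply MeasureTheory.integral_mono_of_nonneg
    · filter_upwards [MeasureTheory.ae_restrict_mem measurableSet_Icc] with x hx using hnn x hx
    · exact hgi
    · filter_upwards [MeasureTheory.ae_restrict_mem measurableSet_Icc] with x hx using hpoint x hx
  have hJ := J_bound b c hb hc (by rw [← hρdef]; exact hρ1)
  rw [← hρdef] at hJ
  have hfinal : 1 / (1 - ρ) ≤ Real.exp q := by
    have h1 : 1 / (1 - ρ) ≤ 1 / (1 - q/2) := by
      apply one_div_le_one_div_of_le (by linarith)
      linarith
    exact h1.trans (inv_le_exp hq0 hq1)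
  calc verblunskyExp b (fun γ => Real.exp (t * (γ ^ 2).re + s * (γ ^ 2).im))
      ≤ ∫ x in Set.Icc (0:ℝ) 1, Real.cosh (Real.sqrt c * x) * (b * (1-x) ^ (b-1)) := hE
    _ ≤ 1 / (1 - ρ) := hJ
    _ ≤ Real.exp q := hfinal
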